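/- Let n, s ≥ 1 and let δ be either the chordal distance d_C or the Fubini–Study distance d_FS on the projective space ℙ^{n−1} = Gr(1,n). Then any finite set of lines in ℝ^n whose pairwise distances under δ take at most s distinct values has cardinality at most C(n + 2s − 1, n − 1) + C(n + 2s − 2, n − 1). -/

import Mathlib

open Real
open scoped RealInnerProductSpace

namespace Stmt8Aux

variable {n m : ℕ}

/-- Monomial function on the points `u`. -/
def mon (u : Fin m → EuclideanSpace ℝ (Fin n)) (c : Multiset (Fin n)) : Fin m → ℝ :=
  fun j => (c.map (fun t => u j t)).prod

/-- Span of degree-`k` monomial functions evaluated at the points. -/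
def Sp (u : Fin m → EuclideanSpace ℝ (Fin n)) (k : ℕ) : Submodule ℝ (Fin m → ℝ) :=
  Submodule.span ℝ {f | ∃ c : Multiset (Fin n), Multiset.card c = k ∧ f = mon u c}

lemma mon_mem (u : Fin m → EuclideanSpace ℝ (Fin n)) (c : Multiset (Fin n)) :
    mon u c ∈ Sp u (Multiset.card c) :=
  Submodule.subset_span ⟨c, rfl, rfl⟩

lemma one_mem_sp0 (u : Fin m → EuclideanSpace ℝ (Fin n)) : (1 : Fin m → ℝ) ∈ Sp u 0 := by
  have h : (1 : Fin m → ℝ) = mon u 0 := by funext j; simp [mon]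
  rw [h]; exact mon_mem u 0

lemma mul_mem_sp {u : Fin m → EuclideanSpace ℝ (Fin n)} {f g : Fin m → ℝ} {a b : ℕ}
    (hf : f ∈ Sp u a) (hg : g ∈ Sp u b) : f * g ∈ Sp u (a + b) := by
  have h := Submodule.mul_mem_mul hf hg
  rw [Sp, Sp, Submodule.span_mul_span] at h
  refine Submodule.span_le.2 ?_ h
  rintro x ⟨f', ⟨c, hc, rfl⟩, g', ⟨c', hc', rfl⟩, rfl⟩
  have he : mon u c * mon u c' = mon u (c + c') := by
    funext j; simp [mon, Multiset.prod_add]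
  show mon u c * mon u c' ∈ (Sp u (a + b) : Set (Fin m → ℝ))
  rw [he]
  have := mon_mem u (c + c')
  rwa [Multiset.card_add, hc, hc'] at this

lemma one_mem_sp2 (u : Fin m → EuclideanSpace ℝ (Fin n)) (hunit : ∀ i, ‖u i‖ = 1) :
    (1 : Fin m → ℝ) ∈ Sp u 2 := by
  have h1 : (1 : Fin m → ℝ) = ∑ t : Fin n, mon u {t, t} := by
    funext j
    have hs : ∑ t, u j t * u j t = 1 := by
      have := real_inner_self_eq_norm_sq (u j)
      rw [hunit j] at this
      rw [PiLp.inner_apply] at this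
      simpa [sq] using this
    simpa [mon, Finset.sum_apply] using hs.symm
  rw [h1]
  exact Submodule.sum_mem _ (fun t _ => by simpa using mon_mem u {t, t})

lemma ell_mem (u : Fin m → EuclideanSpace ℝ (Fin n)) (w : EuclideanSpace ℝ (Fin n)) :
    (fun j => ⟪u j, w⟫) ∈ Sp u 1 := by
  have h : (fun j => (⟪u j, w⟫ : ℝ)) = ∑ t : Fin n, w t • mon u {t} := by
    funext j
    simp [PiLp.inner_apply, mon, Finset.sum_apply, mul_comm]
  rw [h]
  exact Submodule.sum_mem _ fun t _ =>
    Submodule.smul_mem _ _ (by simpa using mon_mem u {t})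

lemma pad_mem {u : Fin m → EuclideanSpace ℝ (Fin n)} (hunit : ∀ i, ‖u i‖ = 1)
    {f : Fin m → ℝ} {a : ℕ} (hf : f ∈ Sp u a) (k : ℕ) : f ∈ Sp u (a + 2 * k) := by
  induction k with
  | zero => simpa using hf
  | succ k ih =>
    have h := mul_mem_sp ih (one_mem_sp2 u hunit)
    rw [mul_one] at h
    have he : a + 2 * (k + 1) = a + 2 * k + 2 := by ring
    rw [he]
    exact h

lemma prod_mem (u : Fin m → EuclideanSpace ℝ (Fin n)) (hunit : ∀ i, ‖u i‖ = 1)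
    (w : EuclideanSpace ℝ (Fin n)) (B : Finset ℝ) :
    (∏ β ∈ B, ((fun j => (⟪u j, w⟫ : ℝ)) * (fun j => (⟪u j, w⟫ : ℝ)) - β • (1 : Fin m → ℝ)))
      ∈ Sp u (2 * B.card) := by
  classical
  induction B using Finset.induction_on with
  | empty => simpa using one_mem_sp0 u
  | insert _ _ hβ ih =>
    rename_i β B'
    rw [Finset.prod_insert hβ]
    have h2 : ((fun j => (⟪u j, w⟫ : ℝ)) * (fun j => (⟪u j, w⟫ : ℝ)) - β • (1 : Fin m → ℝ))
        ∈ Sp u 2 := by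
      refine Submodule.sub_mem _ ?_ (Submodule.smul_mem _ _ (one_mem_sp2 u hunit))
      have := mul_mem_sp (ell_mem u w) (ell_mem u w)
      simpa using this
    have h := mul_mem_sp h2 ih
    have he : 2 * (insert β B').card = 2 + 2 * B'.card := by
      rw [Finset.card_insert_of_notMem hβ]; ring
    rw [he]
    exact h

end Stmt8Aux

open Stmt8Aux in
/-- a set of `m` distinct lines in `ℝⁿ` (given by unit vectors `u i`) whose
pairwise distances under the chordal distance `sin θ` or the Fubini–Study distance `θ`
(`θ = arccos |⟨u,v⟩|`) take at most `s` distinct values satisfies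
`m ≤ C(n+2s−1, n−1) + C(n+2s−2, n−1)`. -/
theorem stmt8 (n s m : ℕ) (hn : 1 ≤ n) (hs : 1 ≤ s)
    (u : Fin m → EuclideanSpace ℝ (Fin n))
    (hunit : ∀ i, ‖u i‖ = 1)
    (hlines : ∀ i j, i ≠ j → |⟪u i, u j⟫| ≠ 1)
    (d : Fin m → Fin m → ℝ)
    (hd : (∀ i j, d i j = Real.sin (Real.arccos |⟪u i, u j⟫|)) ∨
          (∀ i j, d i j = Real.arccos |⟪u i, u j⟫|))
    (A : Finset ℝ) (hA : A.card ≤ s)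
    (hmem : ∀ i j, i ≠ j → d i j ∈ A) :
    m ≤ (n + 2 * s - 1).choose (n - 1) + (n + 2 * s - 2).choose (n - 1) := by
  classical
  -- a function g recovering the squared inner product from the distance
  obtain ⟨g, hg⟩ : ∃ g : ℝ → ℝ, ∀ i j, i ≠ j → (⟪u i, u j⟫ : ℝ) ^ 2 = g (d i j) := by
    rcases hd with hd | hd
    · refine ⟨fun a => 1 - a ^ 2, fun i j hij => ?_⟩
      have h1 := abs_real_inner_le_norm (u i) (u j)
      rw [hunit i, hunit j, one_mul] at h1
      have h2 : (0:ℝ) ≤ 1 - |(⟪u i, u j⟫ : ℝ)| ^ 2 := by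
        nlinarith [abs_nonneg (⟪u i, u j⟫ : ℝ)]
      simp only [hd i j, Real.sin_arccos]
      rw [Real.sq_sqrt h2, sq_abs]
      ring
    · refine ⟨fun a => Real.cos a ^ 2, fun i j hij => ?_⟩
      have h1 := abs_real_inner_le_norm (u i) (u j)
      rw [hunit i, hunit j, one_mul] at h1
      simp only [hd i j]
      rw [Real.cos_arccos (le_trans (by norm_num) (abs_nonneg _)) h1, sq_abs]
  set B : Finset ℝ := (A.image g).filter (· ≠ 1) with hB
  have hBcard : B.card ≤ s :=
    le_trans (le_trans (Finset.card_filter_le _ _) (Finset.card_image_le)) hA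
  have hmemB : ∀ i j, i ≠ j → (⟪u i, u j⟫ : ℝ) ^ 2 ∈ B := by
    intro i j hij
    rw [hB, Finset.mem_filter]
    constructor
    · rw [hg i j hij]
      exact Finset.mem_image_of_mem g (hmem i j hij)
    · intro h1
      apply hlines i j hij
      have h0 : (0:ℝ) ≤ |(⟪u i, u j⟫ : ℝ)| := abs_nonneg _
      have : |(⟪u i, u j⟫ : ℝ)| ^ 2 = 1 := by rwa [sq_abs]
      nlinarith
  -- the functions v i
  set v : Fin m → (Fin m → ℝ) :=
    fun i => ∏ β ∈ B, ((fun j => (⟪u j, u i⟫ : ℝ)) * (fun j => (⟪u j, u i⟫ : ℝ))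
      - β • (1 : Fin m → ℝ)) with hv
  have hvapp : ∀ i j, v i j = ∏ β ∈ B, ((⟪u j, u i⟫ : ℝ) ^ 2 - β) := by
    intro i j
    rw [hv]
    simp [Finset.prod_apply, sq]
  have hvdiag : ∀ i, v i i ≠ 0 := by
    intro i
    rw [hvapp]
    rw [Finset.prod_ne_zero_iff]
    intro β hβ
    have hβ1 : β ≠ 1 := (Finset.mem_filter.1 hβ).2
    have : (⟪u i, u i⟫ : ℝ) = 1 := by
      have := real_inner_self_eq_norm_sq (u i)
      rw [hunit i] at this; simpa using this
    rw [this]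
    intro hc
    apply hβ1
    linarith [sub_eq_zero.1 hc]
  have hvoff : ∀ i j, i ≠ j → v i j = 0 := by
    intro i j hij
    rw [hvapp]
    refine Finset.prod_eq_zero (hmemB j i (Ne.symm hij)) ?_
    rw [sub_self]
  -- v is linearly independent
  have hli : LinearIndependent ℝ v := by
    rw [Fintype.linearIndependent_iff]
    intro c hc i
    have := congrFun hc i
    simp only [Finset.sum_apply, Pi.smul_apply, smul_eq_mul, Pi.zero_apply] at this
    rw [Finset.sum_eq_single i (fun j _ hji => by rw [hvoff j i hji, mul_zero])
      (fun h => absurd (Finset.mem_univ i) h)] at this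
    exact (mul_eq_zero.1 this).resolve_right (hvdiag i)
  -- every v i lies in Sp u (2*s)
  have hvmem : ∀ i, v i ∈ Sp u (2 * s) := by
    intro i
    have h1 := prod_mem u hunit (u i) B
    have h2 := pad_mem hunit h1 (s - B.card)
    have he : 2 * B.card + 2 * (s - B.card) = 2 * s := by omega
    rw [he] at h2
    exact h2
  -- rank bound
  have hspan : Submodule.span ℝ (Set.range v) ≤ Sp u (2 * s) := by
    rw [Submodule.span_le]
    rintro x ⟨i, rfl⟩
    exact hvmem i
  have hm : m = Module.finrank ℝ (Submodule.span ℝ (Set.range v)) := by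
    rw [finrank_span_eq_card hli, Fintype.card_fin]
  -- Sp u (2*s) is spanned by the monomial family indexed by Sym (Fin n) (2*s)
  have hSp : Sp u (2 * s) =
      Submodule.span ℝ (Set.range (fun σ : Sym (Fin n) (2 * s) => mon u ↑σ)) := by
    rw [Sp]
    congr 1
    ext f
    constructor
    · rintro ⟨c, hc, rfl⟩
      exact ⟨⟨c, hc⟩, rfl⟩
    · rintro ⟨⟨c, hc⟩, rfl⟩
      exact ⟨c, hc, rfl⟩
  have hrank : Module.finrank ℝ (Sp u (2 * s)) ≤ Fintype.card (Sym (Fin n) (2 * s)) := by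
    rw [hSp]
    exact finrank_span_le_card _ |>.trans (by rw [Set.toFinset_card]; exact Fintype.card_range_le _)
  have hcount : Fintype.card (Sym (Fin n) (2 * s)) = (n + 2 * s - 1).choose (n - 1) := by
    rw [Sym.card_sym_eq_choose, Fintype.card_fin]
    have h1 : 2 * s ≤ n + 2 * s - 1 := by omega
    have h2 : n + 2 * s - 1 - 2 * s = n - 1 := by omega
    rw [← h2, Nat.choose_symm h1]
  have : m ≤ (n + 2 * s - 1).choose (n - 1) := by
    rw [hm, ← hcount]
    exact le_trans (Submodule.finrank_mono hspan) hrank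
  exact le_trans this (Nat.le_add_right _ _)
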